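/- In the N = 2 case, the size and κ of the combined partition μ(λ^{(1)}, λ^{(2)}; p) (built from charges (p, -p)) are: |μ| = 2(|λ^{(1)}| + |λ^{(2)}|) + p(2p - 1), and κ(μ) = 4(κ(λ^{(1)}) + κ(λ^{(2)})) + 2(4p - 1)(|λ^{(1)}| - |λ^{(2)}|). -/

import Mathlib

/-- The Maya diagram of a partition: the set `{μ_i - i + 1/2 : i ≥ 1} ⊆ ℤ + 1/2`,
realized inside `ℚ` (with the 0-indexed row lengths, `x_i = μ.rowLen i - (i+1) + 1/2`). -/
def maya (μ : YoungDiagram) : Set ℚ :=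
  Set.range fun i : ℕ => (μ.rowLen i : ℚ) - i - 1 / 2

/-- The disjoint union `{2(x_i(λ¹) + p - 1/4) : i ≥ 1} ∪ {2(x_j(λ²) - p + 1/4) : j ≥ 1}`
(with `x_i(λ) = λ_i - i + 1/2`, rows 0-indexed), the Maya diagram of the combined
partition `μ(λ¹, λ²; p)` in the 2-component decomposition with charges `(p, -p)`. -/
def maya2 (l1 l2 : YoungDiagram) (p : ℤ) : Set ℚ :=
  (Set.range fun i : ℕ => 2 * ((l1.rowLen i : ℚ) - i - 1 / 2 + p - 1 / 4)) ∪
  (Set.range fun j : ℕ => 2 * ((l2.rowLen j : ℚ) - j - 1 / 2 - p + 1 / 4))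

/-- `κ(μ) = 2 ∑_{(i,j) ∈ μ} (j - i)`, summed over the boxes of the Young diagram. -/
def kappa (μ : YoungDiagram) : ℤ :=
  2 * ∑ c ∈ μ.cells, ((c.2 : ℤ) - (c.1 : ℤ))

open Finset


lemma qGauss (n : ℕ) : ∑ k ∈ Finset.range n, (k:ℚ) = n*(n-1)/2 := by
  induction n with
  | zero => simp
  | succ m ih => rw [Finset.sum_range_succ, ih]; push_cast; ring

lemma qSq (n : ℕ) : ∑ k ∈ Finset.range n, (k:ℚ)^2 = n*(n-1)*(2*n-1)/6 := by
  induction n with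
  | zero => simp
  | succ m ih => rw [Finset.sum_range_succ, ih]; push_cast; ring

lemma rowLen_zero {μ : YoungDiagram} {i : ℕ} (h : μ.colLen 0 ≤ i) : μ.rowLen i = 0 := by
  by_contra hne
  have h0 : (i, 0) ∈ μ := YoungDiagram.mem_iff_lt_rowLen.2 (Nat.pos_of_ne_zero hne)
  rw [YoungDiagram.mem_iff_lt_colLen] at h0
  omega

lemma cells_eq_biUnion (μ : YoungDiagram) {n : ℕ} (hn : μ.colLen 0 ≤ n) :
    μ.cells = (Finset.range n).biUnion μ.row := by
  ext ⟨i, j⟩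
  simp only [Finset.mem_biUnion, Finset.mem_range, YoungDiagram.mem_row_iff, YoungDiagram.mem_cells]
  constructor
  · intro hm
    have : (i, 0) ∈ μ := μ.up_left_mem le_rfl (Nat.zero_le _) hm
    rw [YoungDiagram.mem_iff_lt_colLen] at this
    exact ⟨i, by omega, hm, rfl⟩
  · rintro ⟨a, _, hm, rfl⟩; exact hm

lemma row_pairwise (μ : YoungDiagram) {n : ℕ} :
    ((Finset.range n) : Set ℕ).PairwiseDisjoint μ.row := by
  intro a _ b _ hab
  simp only [Finset.disjoint_left, YoungDiagram.mem_row_iff]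
  rintro ⟨i, j⟩ ⟨_, rfl⟩ ⟨_, rfl⟩
  exact hab rfl

lemma sum_cells (μ : YoungDiagram) {n : ℕ} (hn : μ.colLen 0 ≤ n) (f : ℕ × ℕ → ℚ) :
    ∑ c ∈ μ.cells, f c = ∑ i ∈ Finset.range n, ∑ j ∈ Finset.range (μ.rowLen i), f (i, j) := by
  rw [cells_eq_biUnion μ hn, Finset.sum_biUnion (row_pairwise μ)]
  refine Finset.sum_congr rfl fun i _ => ?_
  rw [YoungDiagram.row_eq_prod, Finset.sum_product, Finset.sum_singleton]

lemma card_eq_sum (μ : YoungDiagram) {n : ℕ} (hn : μ.colLen 0 ≤ n) :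
    (μ.card : ℚ) = ∑ i ∈ Finset.range n, (μ.rowLen i : ℚ) := by
  have h2 := sum_cells μ hn (fun _ => (1:ℚ))
  simp only [Finset.sum_const, Finset.card_range, nsmul_eq_mul, mul_one] at h2
  rw [YoungDiagram.card, ← h2, Finset.cast_card]

lemma kappa_eq_sum (μ : YoungDiagram) {n : ℕ} (hn : μ.colLen 0 ≤ n) :
    (kappa μ : ℚ) = ∑ i ∈ Finset.range n,
      ((μ.rowLen i : ℚ)^2 - μ.rowLen i - 2*i*μ.rowLen i) := by
  have hk : (kappa μ : ℚ) = 2 * ∑ c ∈ μ.cells, ((c.2 : ℚ) - c.1) := by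
    unfold kappa; push_cast; ring
  rw [hk, sum_cells μ hn (fun c => (c.2 : ℚ) - c.1), Finset.mul_sum]
  refine Finset.sum_congr rfl fun i _ => ?_
  rw [Finset.sum_sub_distrib, qGauss]
  simp [Finset.sum_const, Finset.card_range]
  ring

def xs (μ : YoungDiagram) : ℕ → ℚ := fun k => (μ.rowLen k : ℚ) - k - 1 / 2
def ys (l1 : YoungDiagram) (p : ℤ) : ℕ → ℚ :=
  fun i => 2 * ((l1.rowLen i : ℚ) - i - 1 / 2 + p - 1 / 4)
def zs (l2 : YoungDiagram) (p : ℤ) : ℕ → ℚ :=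
  fun j => 2 * ((l2.rowLen j : ℚ) - j - 1 / 2 - p + 1 / 4)

lemma xs_strictAnti (μ : YoungDiagram) : StrictAnti (xs μ) := by
  apply strictAnti_nat_of_succ_lt
  intro k
  have h1 : μ.rowLen (k+1) ≤ μ.rowLen k := μ.rowLen_anti k (k+1) (Nat.le_succ k)
  have h2 : (μ.rowLen (k+1) : ℚ) ≤ μ.rowLen k := by exact_mod_cast h1
  unfold xs; push_cast; linarith

lemma ys_strictAnti (l1 : YoungDiagram) (p : ℤ) : StrictAnti (ys l1 p) := by
  apply strictAnti_nat_of_succ_lt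
  intro k
  have h1 : l1.rowLen (k+1) ≤ l1.rowLen k := l1.rowLen_anti k (k+1) (Nat.le_succ k)
  have h2 : (l1.rowLen (k+1) : ℚ) ≤ l1.rowLen k := by exact_mod_cast h1
  unfold ys; push_cast; linarith

lemma zs_strictAnti (l2 : YoungDiagram) (p : ℤ) : StrictAnti (zs l2 p) := by
  apply strictAnti_nat_of_succ_lt
  intro k
  have h1 : l2.rowLen (k+1) ≤ l2.rowLen k := l2.rowLen_anti k (k+1) (Nat.le_succ k)
  have h2 : (l2.rowLen (k+1) : ℚ) ≤ l2.rowLen k := by exact_mod_cast h1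
  unfold zs; push_cast; linarith

lemma maya_eq (μ : YoungDiagram) : maya μ = Set.range (xs μ) := rfl

lemma maya2_eq (l1 l2 : YoungDiagram) (p : ℤ) :
    maya2 l1 l2 p = Set.range (ys l1 p) ∪ Set.range (zs l2 p) := rfl

lemma sum_split (l1 l2 μ : YoungDiagram) (p : ℤ)
    (h : maya μ = maya2 l1 l2 p) (M a b : ℕ)
    (haZ : (a:ℤ) = (M:ℤ) + p) (hbZ : (b:ℤ) = (M:ℤ) - p)
    (hL1 : l1.colLen 0 ≤ a) (hL2 : l2.colLen 0 ≤ b) (hLm : μ.colLen 0 ≤ 2*M)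
    (f : ℚ → ℚ) :
    ∑ k ∈ Finset.range (2*M), f (xs μ k) =
      ∑ i ∈ Finset.range a, f (ys l1 p i) + ∑ j ∈ Finset.range b, f (zs l2 p j) := by
  have haQ : (a:ℚ) = (M:ℚ) + (p:ℚ) := by
    exact_mod_cast congrArg (fun t : ℤ => (t:ℚ)) haZ
  have hbQ : (b:ℚ) = (M:ℚ) - (p:ℚ) := by
    exact_mod_cast congrArg (fun t : ℤ => (t:ℚ)) hbZ
  have h' : Set.range (xs μ) = Set.range (ys l1 p) ∪ Set.range (zs l2 p) := by
    rw [← maya_eq, ← maya2_eq]; exact h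
  -- lower bound for xs on range (2*M)
  have hxlb : ∀ k, k < 2*M → -2*(M:ℚ) + 1/2 ≤ xs μ k := by
    intro k hk
    have h1 : (k:ℚ) + 1 ≤ ((2*M : ℕ):ℚ) := by exact_mod_cast hk
    push_cast at h1
    have h2 : (0:ℚ) ≤ (μ.rowLen k : ℚ) := Nat.cast_nonneg _
    unfold xs; linarith
  have hxub : ∀ k, 2*M ≤ k → xs μ k ≤ -2*(M:ℚ) - 1/2 := by
    intro k hk
    have h1 : μ.rowLen k = 0 := rowLen_zero (le_trans hLm hk)
    have h2 : ((2*M : ℕ):ℚ) ≤ (k:ℚ) := by exact_mod_cast hk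
    push_cast at h2
    unfold xs; rw [h1]; push_cast; linarith
  have hyub : ∀ i, a ≤ i → ys l1 p i ≤ -2*(M:ℚ) - 3/2 := by
    intro i hi
    have h1 : ys l1 p i ≤ ys l1 p a := (ys_strictAnti l1 p).antitone hi
    have h2 : ys l1 p a = -2*(M:ℚ) - 3/2 := by
      unfold ys; rw [rowLen_zero hL1, haQ]; push_cast; ring
    linarith
  have hzub : ∀ j, b ≤ j → zs l2 p j ≤ -2*(M:ℚ) - 1/2 := by
    intro j hj
    have h1 : zs l2 p j ≤ zs l2 p b := (zs_strictAnti l2 p).antitone hj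
    have h2 : zs l2 p b = -2*(M:ℚ) - 1/2 := by
      unfold zs; rw [rowLen_zero hL2, hbQ]; push_cast; ring
    linarith
  have hylb : ∀ i, i < a → -2*(M:ℚ) + 1/2 ≤ ys l1 p i := by
    intro i hi
    have h1 : (i:ℚ) + 1 ≤ (a:ℚ) := by exact_mod_cast hi
    rw [haQ] at h1
    have h2 : (0:ℚ) ≤ (l1.rowLen i : ℚ) := Nat.cast_nonneg _
    unfold ys; linarith
  have hzlb : ∀ j, j < b → -2*(M:ℚ) + 1/2 ≤ zs l2 p j := by
    intro j hj
    have h1 : (j:ℚ) + 1 ≤ (b:ℚ) := by exact_mod_cast hj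
    rw [hbQ] at h1
    have h2 : (0:ℚ) ≤ (l2.rowLen j : ℚ) := Nat.cast_nonneg _
    unfold zs; linarith
  have hyz : ∀ i j, ys l1 p i ≠ zs l2 p j := by
    intro i j heq
    have h1 : (2:ℚ) * ((l1.rowLen i : ℚ) - i + p - (l2.rowLen j : ℚ) + j + p) = 1 := by
      unfold ys zs at heq; linarith
    have h2 : (2:ℤ) * ((l1.rowLen i : ℤ) - i + p - (l2.rowLen j : ℤ) + j + p) = 1 := by
      exact_mod_cast h1
    omega
  have himg : (Finset.range (2*M)).image (xs μ) =
      (Finset.range a).image (ys l1 p) ∪ (Finset.range b).image (zs l2 p) := by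
    apply Finset.ext
    intro v
    simp only [Finset.mem_union, Finset.mem_image, Finset.mem_range]
    constructor
    · rintro ⟨k, hk, rfl⟩
      have hmem : xs μ k ∈ Set.range (ys l1 p) ∪ Set.range (zs l2 p) := by
        rw [← h']; exact ⟨k, rfl⟩
      rcases hmem with ⟨i, hi⟩ | ⟨j, hj⟩
      · left
        refine ⟨i, ?_, hi⟩
        by_contra hia
        have hb1 := hyub i (le_of_not_gt hia)
        have hb2 := hxlb k hk
        rw [hi] at hb1
        linarith
      · right
        refine ⟨j, ?_, hj⟩
        by_contra hja
        have hb1 := hzub j (le_of_not_gt hja)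
        have hb2 := hxlb k hk
        rw [hj] at hb1
        linarith
    · rintro (⟨i, hi, rfl⟩ | ⟨j, hj, rfl⟩)
      · have hmem : ys l1 p i ∈ Set.range (xs μ) := by
          rw [h']; exact Or.inl ⟨i, rfl⟩
        obtain ⟨k, hk⟩ := hmem
        refine ⟨k, ?_, hk⟩
        by_contra hka
        have hb1 := hxub k (le_of_not_gt hka)
        have hb2 := hylb i hi
        rw [hk] at hb1
        linarith
      · have hmem : zs l2 p j ∈ Set.range (xs μ) := by
          rw [h']; exact Or.inr ⟨j, rfl⟩
        obtain ⟨k, hk⟩ := hmem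
        refine ⟨k, ?_, hk⟩
        by_contra hka
        have hb1 := hxub k (le_of_not_gt hka)
        have hb2 := hzlb j hj
        rw [hk] at hb1
        linarith
  have hdisj : Disjoint ((Finset.range a).image (ys l1 p))
      ((Finset.range b).image (zs l2 p)) := by
    rw [Finset.disjoint_left]
    rintro v hv1 hv2
    simp only [Finset.mem_image, Finset.mem_range] at hv1 hv2
    obtain ⟨i, _, rfl⟩ := hv1
    obtain ⟨j, _, hj⟩ := hv2
    exact hyz i j hj.symm
  have hinjx : ∀ u ∈ Finset.range (2*M), ∀ v ∈ Finset.range (2*M),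
      xs μ u = xs μ v → u = v := fun u _ v _ huv => (xs_strictAnti μ).injective huv
  have hinjy : ∀ u ∈ Finset.range a, ∀ v ∈ Finset.range a,
      ys l1 p u = ys l1 p v → u = v := fun u _ v _ huv => (ys_strictAnti l1 p).injective huv
  have hinjz : ∀ u ∈ Finset.range b, ∀ v ∈ Finset.range b,
      zs l2 p u = zs l2 p v → u = v := fun u _ v _ huv => (zs_strictAnti l2 p).injective huv
  calc ∑ k ∈ Finset.range (2*M), f (xs μ k)
      = ∑ v ∈ (Finset.range (2*M)).image (xs μ), f v := (Finset.sum_image hinjx).symm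
    _ = ∑ v ∈ (Finset.range a).image (ys l1 p), f v
        + ∑ v ∈ (Finset.range b).image (zs l2 p), f v := by
        rw [himg, Finset.sum_union hdisj]
    _ = ∑ i ∈ Finset.range a, f (ys l1 p i) + ∑ j ∈ Finset.range b, f (zs l2 p j) := by
        rw [Finset.sum_image hinjy, Finset.sum_image hinjz]

lemma big (n : ℕ) (ν : YoungDiagram) (hn : ν.colLen 0 ≤ n) (c0 c1 d0 d1 d2 : ℚ) :
    ∑ i ∈ Finset.range n,
      (c0*((ν.rowLen i : ℚ)^2 - ν.rowLen i - 2*i*ν.rowLen i) + c1*(ν.rowLen i : ℚ)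
        + (d0 + d1*(i:ℚ) + d2*(i:ℚ)^2))
    = c0 * (kappa ν : ℚ) + c1 * (ν.card : ℚ)
      + (d0*(n:ℚ) + d1*((n:ℚ)*(n-1)/2) + d2*((n:ℚ)*(n-1)*(2*n-1)/6)) := by
  rw [Finset.sum_add_distrib, Finset.sum_add_distrib, Finset.sum_add_distrib,
    Finset.sum_add_distrib, ← Finset.mul_sum, ← Finset.mul_sum, ← Finset.mul_sum,
    ← Finset.mul_sum, qSq, qGauss, Finset.sum_const, Finset.card_range, nsmul_eq_mul,
    ← kappa_eq_sum ν hn, ← card_eq_sum ν hn]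
  ring


/-- Size and `κ` of the combined partition `μ(λ¹, λ²; p)` in the `N = 2` decomposition:
`|μ| = 2(|λ¹| + |λ²|) + p(2p - 1)` and
`κ(μ) = 4(κ(λ¹) + κ(λ²)) + 2(4p - 1)(|λ¹| - |λ²|)`. -/
theorem su2_size_kappa (l1 l2 : YoungDiagram) (p : ℤ) (μ : YoungDiagram)
    (h : maya μ = maya2 l1 l2 p) :
    (μ.card : ℤ) = 2 * ((l1.card : ℤ) + l2.card) + p * (2 * p - 1) ∧
    kappa μ = 4 * (kappa l1 + kappa l2) + 2 * (4 * p - 1) * ((l1.card : ℤ) - l2.card) := by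
  obtain ⟨M, hMdef⟩ : ∃ M : ℕ, M = l1.colLen 0 + l2.colLen 0 + μ.colLen 0 + p.natAbs + 1 :=
    ⟨_, rfl⟩
  obtain ⟨a, hadef⟩ : ∃ a : ℕ, a = ((M:ℤ) + p).toNat := ⟨_, rfl⟩
  obtain ⟨b, hbdef⟩ : ∃ b : ℕ, b = ((M:ℤ) - p).toNat := ⟨_, rfl⟩
  have haZ : (a:ℤ) = (M:ℤ) + p := by omega
  have hbZ : (b:ℤ) = (M:ℤ) - p := by omega
  have hL1 : l1.colLen 0 ≤ a := by omega
  have hL2 : l2.colLen 0 ≤ b := by omega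
  have hLm : μ.colLen 0 ≤ 2*M := by omega
  have haQ : (a:ℚ) = (M:ℚ) + (p:ℚ) := by
    exact_mod_cast congrArg (fun t : ℤ => (t:ℚ)) haZ
  have hbQ : (b:ℚ) = (M:ℚ) - (p:ℚ) := by
    exact_mod_cast congrArg (fun t : ℤ => (t:ℚ)) hbZ
  have E1 : ∑ k ∈ Finset.range (2*M), xs μ k =
      ∑ i ∈ Finset.range a, ys l1 p i + ∑ j ∈ Finset.range b, zs l2 p j :=
    sum_split l1 l2 μ p h M a b haZ hbZ hL1 hL2 hLm (fun v => v)
  have E2 : ∑ k ∈ Finset.range (2*M), (xs μ k)^2 =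
      ∑ i ∈ Finset.range a, (ys l1 p i)^2 + ∑ j ∈ Finset.range b, (zs l2 p j)^2 :=
    sum_split l1 l2 μ p h M a b haZ hbZ hL1 hL2 hLm (fun v => v^2)
  -- closed forms for the six sums
  have ex1 : ∀ k ∈ Finset.range (2*M), xs μ k
      = (0:ℚ)*((μ.rowLen k : ℚ)^2 - μ.rowLen k - 2*k*μ.rowLen k) + 1*(μ.rowLen k : ℚ)
        + ((-1/2) + (-1)*(k:ℚ) + 0*(k:ℚ)^2) := by
    intro k _; unfold xs; ring
  have hx1 := (Finset.sum_congr rfl ex1).trans (big (2*M) μ hLm 0 1 (-1/2) (-1) 0)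
  have ex2 : ∀ k ∈ Finset.range (2*M), (xs μ k)^2
      = (1:ℚ)*((μ.rowLen k : ℚ)^2 - μ.rowLen k - 2*k*μ.rowLen k) + 0*(μ.rowLen k : ℚ)
        + ((1/4) + 1*(k:ℚ) + 1*(k:ℚ)^2) := by
    intro k _; unfold xs; ring
  have hx2 := (Finset.sum_congr rfl ex2).trans (big (2*M) μ hLm 1 0 (1/4) 1 1)
  have ey1 : ∀ i ∈ Finset.range a, ys l1 p i
      = (0:ℚ)*((l1.rowLen i : ℚ)^2 - l1.rowLen i - 2*i*l1.rowLen i) + 2*(l1.rowLen i : ℚ)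
        + ((2*(p:ℚ) - 3/2) + (-2)*(i:ℚ) + 0*(i:ℚ)^2) := by
    intro i _; unfold ys; ring
  have hy1 := (Finset.sum_congr rfl ey1).trans (big a l1 hL1 0 2 (2*(p:ℚ) - 3/2) (-2) 0)
  have ey2 : ∀ i ∈ Finset.range a, (ys l1 p i)^2
      = (4:ℚ)*((l1.rowLen i : ℚ)^2 - l1.rowLen i - 2*i*l1.rowLen i)
        + (8*(p:ℚ) - 2)*(l1.rowLen i : ℚ)
        + ((2*(p:ℚ) - 3/2)^2 + (6 - 8*(p:ℚ))*(i:ℚ) + 4*(i:ℚ)^2) := by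
    intro i _; unfold ys; ring
  have hy2 := (Finset.sum_congr rfl ey2).trans
    (big a l1 hL1 4 (8*(p:ℚ) - 2) ((2*(p:ℚ) - 3/2)^2) (6 - 8*(p:ℚ)) 4)
  have ez1 : ∀ j ∈ Finset.range b, zs l2 p j
      = (0:ℚ)*((l2.rowLen j : ℚ)^2 - l2.rowLen j - 2*j*l2.rowLen j) + 2*(l2.rowLen j : ℚ)
        + ((-2*(p:ℚ) - 1/2) + (-2)*(j:ℚ) + 0*(j:ℚ)^2) := by
    intro j _; unfold zs; ring
  have hz1 := (Finset.sum_congr rfl ez1).trans (big b l2 hL2 0 2 (-2*(p:ℚ) - 1/2) (-2) 0)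
  have ez2 : ∀ j ∈ Finset.range b, (zs l2 p j)^2
      = (4:ℚ)*((l2.rowLen j : ℚ)^2 - l2.rowLen j - 2*j*l2.rowLen j)
        + (2 - 8*(p:ℚ))*(l2.rowLen j : ℚ)
        + ((-2*(p:ℚ) - 1/2)^2 + (8*(p:ℚ) + 2)*(j:ℚ) + 4*(j:ℚ)^2) := by
    intro j _; unfold zs; ring
  have hz2 := (Finset.sum_congr rfl ez2).trans
    (big b l2 hL2 4 (2 - 8*(p:ℚ)) ((-2*(p:ℚ) - 1/2)^2) (8*(p:ℚ) + 2) 4)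
  push_cast at hx1 hx2 hy1 hy2 hz1 hz2
  rw [haQ] at hy1 hy2
  rw [hbQ] at hz1 hz2
  constructor
  · have g1 : (μ.card : ℚ) = 2 * ((l1.card : ℚ) + l2.card) + p * (2 * p - 1) := by
      linear_combination E1 - hx1 + hy1 + hz1
    exact_mod_cast g1
  · have g2 : (kappa μ : ℚ) = 4 * ((kappa l1 : ℚ) + kappa l2)
        + 2 * (4 * (p:ℚ) - 1) * ((l1.card : ℚ) - l2.card) := by
      linear_combination E2 - hx2 + hy2 + hz2
    exact_mod_cast g2
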